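/- Let G be a finite group with subgroups A, B, M satisfying conditions (1)–(4) of the soft plane construction. Then G is generated by A and B. -/

import Mathlib

open scoped Pointwise

set_option maxHeartbeats 1000000 in
/-- Under conditions (1)–(4), `G = ⟨A, B⟩`. -/
theorem stmt4 {G : Type*} [Group G] [Finite G]
    (A B M AM BM : Subgroup G) (n k : ℕ) (hn : 1 < n)
    (hk : k = Nat.card (A ⊓ B : Subgroup G))
    (hA : Nat.card A = n * k) (hB : Nat.card B = n * k) (hM : Nat.card M = n * k)
    (hG : Nat.card G = n ^ 3 * k)
    (hAM : (AM : Set G) = (A : Set G) * (M : Set G))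
    (hBM : (BM : Set G) = (B : Set G) * (M : Set G))
    (hAMcard : Nat.card AM = n ^ 2 * k) (hBMcard : Nat.card BM = n ^ 2 * k)
    (h3 : ∀ g : G, ∃ a ∈ A, ∃ m ∈ M, ∃ b ∈ B, g = a * m * b)
    (h4 : ((A : Set G) * (B : Set G)) ∩ ((B : Set G) * (A : Set G)) =
      (A : Set G) ∪ (B : Set G)) :
    Subgroup.closure ((A : Set G) ∪ (B : Set G)) = ⊤ := by
  classical
  have _inst : Fintype G := Fintype.ofFinite G
  by_contra hne
  set H := Subgroup.closure ((A : Set G) ∪ (B : Set G)) with hHdef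
  have hk1 : 0 < k := by rw [hk]; exact Nat.card_pos
  -- finsets
  set Af : Finset G := (A : Set G).toFinset with hAfdef
  set Bf : Finset G := (B : Set G).toFinset with hBfdef
  set Cf : Finset G := ((A ⊓ B : Subgroup G) : Set G).toFinset with hCfdef
  set Hf : Finset G := (H : Set G).toFinset with hHfdef
  have memAf : ∀ x : G, x ∈ Af ↔ x ∈ A := by intro x; simp [hAfdef]
  have memBf : ∀ x : G, x ∈ Bf ↔ x ∈ B := by intro x; simp [hBfdef]
  have memCf : ∀ x : G, x ∈ Cf ↔ x ∈ A ∧ x ∈ B := by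
    intro x; simp [hCfdef, Subgroup.mem_inf]
  have memHf : ∀ x : G, x ∈ Hf ↔ x ∈ H := by intro x; simp [hHfdef]
  have bridge : ∀ (S : Subgroup G), Nat.card S = (S : Set G).toFinset.card := by
    intro S
    rw [← SetLike.coe_sort_coe, Nat.card_coe_set_eq, Set.ncard_eq_toFinset_card']
  have cardAf : Af.card = n * k := by rw [hAfdef, ← bridge, hA]
  have cardBf : Bf.card = n * k := by rw [hBfdef, ← bridge, hB]
  have cardCf : Cf.card = k := by rw [hCfdef, ← bridge, ← hk]
  have cardHf : Hf.card = Nat.card H := by rw [hHfdef, bridge]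
  -- the size of B \ A
  set e : ℕ := (Bf \ Af).card with hedef
  have he : e + k = n * k := by
    have h1 : (Bf \ Af).card + (Bf ∩ Af).card = Bf.card :=
      Finset.card_sdiff_add_card_inter _ _
    have h2 : Bf ∩ Af = Cf := by
      ext x
      simp only [Finset.mem_inter, memAf, memBf, memCf]
      tauto
    rw [h2, cardCf, cardBf] at h1
    exact h1
  -- the product set A * (B \ A) * A
  set f : G × G × G → G := fun p => p.1 * p.2.1 * p.2.2 with hfdef
  set D : Finset (G × G × G) := Af ×ˢ ((Bf \ Af) ×ˢ Af) with hDdef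
  set T : Finset G := D.image f with hTdef
  have memD : ∀ p : G × G × G, p ∈ D ↔ p.1 ∈ A ∧ (p.2.1 ∈ B ∧ p.2.1 ∉ A) ∧ p.2.2 ∈ A := by
    intro p
    simp only [hDdef, Finset.mem_product, Finset.mem_sdiff, memAf, memBf]
  -- T is contained in H
  have hTsub : T ⊆ Hf := by
    intro g hg
    obtain ⟨p, hp, rfl⟩ := Finset.mem_image.mp hg
    obtain ⟨ha, ⟨hb, _⟩, hc⟩ := (memD p).mp hp
    rw [memHf]
    exact H.mul_mem (H.mul_mem (Subgroup.subset_closure (Or.inl ha))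
      (Subgroup.subset_closure (Or.inr hb))) (Subgroup.subset_closure (Or.inl hc))
  have hAfsub : Af ⊆ Hf := by
    intro x hx
    rw [memHf]
    exact Subgroup.subset_closure (Or.inl ((memAf x).mp hx))
  -- T is disjoint from A
  have hdisj : Disjoint Af T := by
    rw [Finset.disjoint_left]
    intro g hg hgT
    obtain ⟨p, hp, hfp⟩ := Finset.mem_image.mp hgT
    obtain ⟨ha, ⟨hb, hbn⟩, hc⟩ := (memD p).mp hp
    apply hbn
    have : p.2.1 = p.1⁻¹ * g * p.2.2⁻¹ := by rw [← hfp, hfdef]; group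
    rw [this]
    exact A.mul_mem (A.mul_mem (A.inv_mem ha) ((memAf g).mp hg)) (A.inv_mem hc)
  -- fiber bound via h4
  have hfiber : ∀ g ∈ T, (D.filter (fun p => f p = g)).card ≤ k * k := by
    intro g hg
    obtain ⟨p₀, hp₀, hfp₀⟩ := Finset.mem_image.mp hg
    obtain ⟨a₀, b₀, c₀⟩ := p₀
    obtain ⟨ha₀, ⟨hb₀, hb₀n⟩, hc₀⟩ := (memD (a₀, b₀, c₀)).mp hp₀
    have hfp₀' : a₀ * b₀ * c₀ = g := hfp₀
    have key : ∀ p ∈ D.filter (fun p => f p = g),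
        (a₀⁻¹ * p.1) ∈ (A ⊓ B : Subgroup G) ∧ (p.2.2 * c₀⁻¹) ∈ (A ⊓ B : Subgroup G) := by
      intro p hp
      obtain ⟨hpD, hpf⟩ := Finset.mem_filter.mp hp
      obtain ⟨ha, ⟨hb, hbn⟩, hc⟩ := (memD p).mp hpD
      obtain ⟨a, b, c⟩ := p
      simp only at ha hb hbn hc ⊢
      have hpf' : a * b * c = g := hpf
      have keyeq : (a₀⁻¹ * a) * b * (c * c₀⁻¹) = b₀ := by
        have : (a₀⁻¹ * a) * b * (c * c₀⁻¹) = a₀⁻¹ * (a * b * c) * c₀⁻¹ := by group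
        rw [this, hpf', ← hfp₀']
        group
      have hαA : a₀⁻¹ * a ∈ A := A.mul_mem (A.inv_mem ha₀) ha
      have hβA : c * c₀⁻¹ ∈ A := A.mul_mem hc (A.inv_mem hc₀)
      have hmemAB : (a₀⁻¹ * a) * b ∈ (A : Set G) * (B : Set G) :=
        Set.mul_mem_mul hαA hb
      have hmemBA : (a₀⁻¹ * a) * b ∈ (B : Set G) * (A : Set G) := by
        have heq2 : (a₀⁻¹ * a) * b = b₀ * (c * c₀⁻¹)⁻¹ := by
          rw [← keyeq]; group
        rw [heq2]
        exact Set.mul_mem_mul hb₀ (A.inv_mem hβA)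
      have hmem : (a₀⁻¹ * a) * b ∈ (A : Set G) ∪ (B : Set G) := by
        rw [← h4]; exact ⟨hmemAB, hmemBA⟩
      rcases hmem with hmem | hmem
      · exfalso
        apply hbn
        have : b = (a₀⁻¹ * a)⁻¹ * ((a₀⁻¹ * a) * b) := by group
        rw [this]
        exact A.mul_mem (A.inv_mem hαA) hmem
      · have hαB : a₀⁻¹ * a ∈ B := by
          have : a₀⁻¹ * a = ((a₀⁻¹ * a) * b) * b⁻¹ := by group
          rw [this]
          exact B.mul_mem hmem (B.inv_mem hb)
        have hβB : c * c₀⁻¹ ∈ B := by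
          have : c * c₀⁻¹ = ((a₀⁻¹ * a) * b)⁻¹ * b₀ := by rw [← keyeq]; group
          rw [this]
          exact B.mul_mem (B.inv_mem hmem) hb₀
        exact ⟨Subgroup.mem_inf.mpr ⟨hαA, hαB⟩, Subgroup.mem_inf.mpr ⟨hβA, hβB⟩⟩
    calc (D.filter (fun p => f p = g)).card
        ≤ (Cf ×ˢ Cf).card := by
          apply Finset.card_le_card_of_injOn (fun p => (a₀⁻¹ * p.1, p.2.2 * c₀⁻¹))
          · intro p hp
            obtain ⟨h1, h2⟩ := key p hp
            rw [Finset.mem_coe, Finset.mem_product]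
            constructor
            · rw [memCf]; exact Subgroup.mem_inf.mp h1
            · rw [memCf]; exact Subgroup.mem_inf.mp h2
          · intro p hp q hq hpq
            obtain ⟨hpD, hpf⟩ := Finset.mem_filter.mp hp
            obtain ⟨hqD, hqf⟩ := Finset.mem_filter.mp hq
            have h1 : p.1 = q.1 := by
              have := congrArg Prod.fst hpq
              simpa using this
            have h2 : p.2.2 = q.2.2 := by
              have := congrArg Prod.snd hpq
              simpa using this
            have hpf' : p.1 * p.2.1 * p.2.2 = g := hpf
            have hqf' : q.1 * q.2.1 * q.2.2 = g := hqf
            have h3' : p.2.1 = q.2.1 := by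
              have e1 : p.2.1 = p.1⁻¹ * g * p.2.2⁻¹ := by rw [← hpf']; group
              have e2 : q.2.1 = q.1⁻¹ * g * q.2.2⁻¹ := by rw [← hqf']; group
              rw [e1, e2, h1, h2]
            exact Prod.ext h1 (Prod.ext h3' h2)
      _ = k * k := by rw [Finset.card_product, cardCf]
  -- hence T is large
  have hTcard : n * n * e ≤ T.card := by
    have h1 : D.card ≤ k * k * T.card := by
      rw [hTdef]
      exact Finset.card_le_mul_card_image D (k * k) hfiber
    have h2 : D.card = (n * k) * (e * (n * k)) := by
      rw [hDdef, Finset.card_product, Finset.card_product, cardAf, ← hedef]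
    have h3' : k * k * (n * n * e) = D.card := by rw [h2]; ring
    have := h3' ▸ h1
    exact Nat.le_of_mul_le_mul_left this (Nat.mul_pos hk1 hk1)
  -- H is large
  have hHcard : n * k + n * n * e ≤ Nat.card H := by
    rw [← cardHf]
    calc n * k + n * n * e ≤ Af.card + T.card := by
          rw [cardAf]; exact Nat.add_le_add_left hTcard _
      _ = (Af ∪ T).card := (Finset.card_union_of_disjoint hdisj).symm
      _ ≤ Hf.card := Finset.card_le_card (Finset.union_subset hAfsub hTsub)
  -- H is a proper subgroup, so its order is at most half of |G|
  have hdvd : Nat.card H ∣ Nat.card G := Subgroup.card_subgroup_dvd_card H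
  have hneq : Nat.card H ≠ Nat.card G := fun h => hne (Subgroup.eq_top_of_card_eq _ h)
  have hGpos : 0 < Nat.card G := Nat.card_pos
  have hhalf : 2 * Nat.card H ≤ Nat.card G := by
    obtain ⟨m, hm⟩ := hdvd
    have hHpos : 0 < Nat.card H := Nat.card_pos
    have hm0 : m ≠ 0 := by
      rintro rfl
      rw [Nat.mul_zero] at hm
      omega
    have hm1 : m ≠ 1 := by
      rintro rfl
      rw [Nat.mul_one] at hm
      exact hneq hm.symm
    have hm2 : 2 ≤ m := by omega
    calc 2 * Nat.card H ≤ m * Nat.card H := Nat.mul_le_mul_right _ hm2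
      _ = Nat.card G := by rw [mul_comm]; exact hm.symm
  rw [hG] at hhalf
  nlinarith [hHcard, hhalf, he, hn, hk1, sq_nonneg (n - 2)]
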